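/- arXiv:2003.11648 — 5 statements merged into one kernel-verified Lean document; each statement's English description precedes it below -/
import Mathlib

section
/- Let R be a one-dimensional Noetherian local domain whose completion is reduced, with integral closure R̄ (which is then a finite R-module). For any non-zero element x of R, the length of R/xR equals the length of R̄/xR̄ as R-modules. -/
set_option synthInstance.maxHeartbeats 1000000
set_option maxHeartbeats 1000000

open IsLocalRing

/-- The length of an `R`-module `M`, defined as the Krull dimension of its lattice of
submodules (the supremum of lengths of strict chains of submodules), valued in `ℕ∞`. -/
noncomputable def rlength (R M : Type*) [Ring R] [AddCommGroup M] [Module R M] : ℕ∞ :=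
  WithBot.unbotD 0 (Order.krullDim (Submodule R M))

section OrderAux

variable {α β γ : Type*}

noncomputable def eDim (α : Type*) [Preorder α] : ℕ∞ := WithBot.unbotD 0 (Order.krullDim α)

lemma eDim_eq_iSup [Preorder α] [Nonempty α] :
    eDim α = ⨆ p : LTSeries α, (p.length : ℕ∞) := by
  rw [eDim, Order.krullDim_eq_iSup_length]
  rfl

lemma length_le_eDim [Preorder α] [Nonempty α] (p : LTSeries α) :
    (p.length : ℕ∞) ≤ eDim α := by
  rw [eDim_eq_iSup]
  exact le_iSup (fun p : LTSeries α => (p.length : ℕ∞)) p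

lemma height_le_eDim [Preorder α] [Nonempty α] (a : α) : Order.height a ≤ eDim α := by
  have := Order.height_le_krullDim a
  cases h : Order.krullDim α with
  | bot => rw [h] at this; simp at this
  | coe v =>
    rw [h] at this
    rw [eDim, h, WithBot.unbotD_coe]
    exact_mod_cast this

lemma eDim_congr [Preorder α] [Preorder β] (e : α ≃o β) : eDim α = eDim β := by
  rw [eDim, eDim, Order.krullDim_eq_of_orderIso e]

lemma height_add_one_le [Preorder α] {x y : α} (h : x < y) :
    Order.height x + 1 ≤ Order.height y := by
  rw [Order.height_eq_iSup_lt_height y]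
  exact le_iSup₂_of_le x h le_rfl

lemma ltSeries_prod_le [Preorder β] [Preorder γ] (p : LTSeries (β × γ)) :
    (p.length : ℕ∞) ≤ Order.height p.last.1 + Order.height p.last.2 := by
  suffices H : ∀ (n : ℕ) (p : LTSeries (β × γ)), p.length = n →
      (n : ℕ∞) ≤ Order.height p.last.1 + Order.height p.last.2 from H p.length p rfl
  intro n
  induction n with
  | zero => intro p _; simp
  | succ n ih =>
    intro p hp
    have h0 : p.length ≠ 0 := by omega
    have hlt : p.eraseLast.last < p.last := p.eraseLast_last_rel_last h0
    have hlen : p.eraseLast.length = n := by simp [RelSeries.eraseLast_length, hp]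
    have IH := ih p.eraseLast hlen
    rcases Prod.lt_iff.mp hlt with ⟨h1, h2⟩ | ⟨h1, h2⟩
    · calc ((n + 1 : ℕ) : ℕ∞) = (n : ℕ∞) + 1 := by push_cast; ring
        _ ≤ (Order.height p.eraseLast.last.1 + Order.height p.eraseLast.last.2) + 1 := by
            exact add_le_add_left IH 1
        _ = (Order.height p.eraseLast.last.1 + 1) + Order.height p.eraseLast.last.2 := by ring
        _ ≤ Order.height p.last.1 + Order.height p.last.2 :=
            add_le_add (height_add_one_le h1) (Order.height_mono h2)
    · calc ((n + 1 : ℕ) : ℕ∞) = (n : ℕ∞) + 1 := by push_cast; ring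
        _ ≤ (Order.height p.eraseLast.last.1 + Order.height p.eraseLast.last.2) + 1 := by
            exact add_le_add_left IH 1
        _ = Order.height p.eraseLast.last.1 + (Order.height p.eraseLast.last.2 + 1) := by ring
        _ ≤ Order.height p.last.1 + (Order.height p.last.2) :=
            add_le_add (Order.height_mono h1) (height_add_one_le h2)

lemma eDim_add_of_modular [Lattice α] [IsModularLattice α] (a : α) :
    eDim α = eDim {b : α // b ≤ a} + eDim {b : α // a ≤ b} := by
  haveI : Nonempty α := ⟨a⟩
  haveI n1 : Nonempty {b : α // b ≤ a} := ⟨⟨a, le_rfl⟩⟩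
  haveI n2 : Nonempty {b : α // a ≤ b} := ⟨⟨a, le_rfl⟩⟩
  apply le_antisymm
  · rw [eDim_eq_iSup (α := α)]
    apply iSup_le
    intro p
    set f : α → {b : α // b ≤ a} × {b : α // a ≤ b} :=
      fun x => (⟨x ⊓ a, inf_le_right⟩, ⟨x ⊔ a, le_sup_right⟩) with hf
    have hsm : StrictMono f := by
      intro x y hxy
      have h := strictMono_inf_prod_sup (z := a) hxy
      rw [Prod.lt_iff] at h ⊢
      rcases h with ⟨h1, h2⟩ | ⟨h1, h2⟩
      · exact Or.inl ⟨Subtype.mk_lt_mk.mpr h1, Subtype.mk_le_mk.mpr h2⟩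
      · exact Or.inr ⟨Subtype.mk_le_mk.mpr h1, Subtype.mk_lt_mk.mpr h2⟩
    have h2 := ltSeries_prod_le (p.map f hsm)
    have hl : (p.map f hsm).length = p.length := rfl
    rw [hl] at h2
    exact h2.trans (add_le_add (height_le_eDim _) (height_le_eDim _))
  · rw [eDim_eq_iSup (α := {b : α // b ≤ a}), eDim_eq_iSup (α := {b : α // a ≤ b})]
    apply ENat.iSup_add_iSup_le
    intro p q
    have hmono1 : StrictMono (fun b : {b : α // b ≤ a} => (b : α)) :=
      fun _ _ h => Subtype.coe_lt_coe.mpr h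
    have hmono2 : StrictMono (fun b : {b : α // a ≤ b} => (b : α)) :=
      fun _ _ h => Subtype.coe_lt_coe.mpr h
    set p' := p.map _ hmono1
    set q' := q.map _ hmono2
    have hle : p'.last ≤ q'.head := by
      have h1 : p'.last = (p.last : α) := LTSeries.last_map _ _ _
      have h2 : q'.head = (q.head : α) := LTSeries.head_map _ _ _
      rw [h1, h2]
      exact le_trans p.last.2 q.head.2
    rcases eq_or_lt_of_le hle with heq | hlt
    · have := length_le_eDim (p'.smash q' heq)
      rw [RelSeries.smash_length] at this
      refine le_trans ?_ this
      simp [p', q']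
    · have := length_le_eDim (p'.append q' hlt)
      rw [RelSeries.append_length] at this
      refine le_trans ?_ this
      have : (p.length : ℕ∞) + q.length ≤ (p.length : ℕ∞) + q.length + 1 := le_self_add
      simpa [p', q'] using this

end OrderAux

section ModuleAux

variable {R : Type*} [Ring R]

lemma rlength_congr {M N : Type*} [AddCommGroup M] [Module R M] [AddCommGroup N] [Module R N]
    (e : M ≃ₗ[R] N) : rlength R M = rlength R N :=
  eDim_congr (Submodule.orderIsoMapComap e)

lemma rlength_add {M : Type*} [AddCommGroup M] [Module R M] (N : Submodule R M) :
    rlength R M = rlength R N + rlength R (M ⧸ N) := by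
  have h1 : rlength R N = eDim {p' : Submodule R M // p' ≤ N} :=
    eDim_congr (Submodule.MapSubtype.orderIso N)
  have h2 : rlength R (M ⧸ N) = eDim {p' : Submodule R M // N ≤ p'} :=
    eDim_congr (Submodule.comapMkQRelIso N)
  rw [h1, h2]
  exact eDim_add_of_modular N

lemma rlength_quot_chain {M : Type*} [AddCommGroup M] [Module R M] (p q : Submodule R M)
    (h : p ≤ q) :
    rlength R (M ⧸ p) = rlength R (q ⧸ p.comap q.subtype) + rlength R (M ⧸ q) := by
  rw [rlength_add (Submodule.map p.mkQ q)]
  congr 1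
  · -- q.map p.mkQ ≃ q ⧸ comap
    have e1 : (q ⧸ LinearMap.ker (p.mkQ ∘ₗ q.subtype)) ≃ₗ[R]
        LinearMap.range (p.mkQ ∘ₗ q.subtype) := (p.mkQ ∘ₗ q.subtype).quotKerEquivRange
    have hker : LinearMap.ker (p.mkQ ∘ₗ q.subtype) = p.comap q.subtype := by
      rw [LinearMap.ker_comp, Submodule.ker_mkQ]
    have hrange : LinearMap.range (p.mkQ ∘ₗ q.subtype) = Submodule.map p.mkQ q := by
      rw [LinearMap.range_comp, Submodule.range_subtype]
    refine (rlength_congr (LinearEquiv.ofEq _ _ hrange)).symm.trans ?_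
    exact (rlength_congr e1.symm).trans (rlength_congr (Submodule.quotEquivOfEq _ _ hker))
  · exact rlength_congr (Submodule.quotientQuotientEquivQuotient p q h)

lemma rlength_le_one_of_simple {M : Type*} [AddCommGroup M] [Module R M]
    [IsSimpleModule R M] : rlength R M ≤ 1 := by
  rw [rlength, show WithBot.unbotD 0 (Order.krullDim (Submodule R M)) = eDim (Submodule R M) from rfl,
    eDim_eq_iSup]
  apply iSup_le
  intro p
  by_contra hcon
  push_neg at hcon
  have h2 : 2 ≤ p.length := by exact_mod_cast hcon
  have h01 : p.toFun ⟨0, by omega⟩ < p.toFun ⟨1, by omega⟩ :=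
    p.strictMono (Fin.mk_lt_mk.mpr (by omega))
  have h12 : p.toFun ⟨1, by omega⟩ < p.toFun ⟨2, by omega⟩ :=
    p.strictMono (Fin.mk_lt_mk.mpr (by omega))
  rcases eq_bot_or_eq_top (p.toFun ⟨1, by omega⟩) with hb | ht
  · rw [hb] at h01; exact not_lt_bot h01
  · rw [ht] at h12; exact not_top_lt h12

lemma rlength_ne_top_of_isFiniteLength {M : Type*} [AddCommGroup M] [Module R M]
    (h : IsFiniteLength R M) : rlength R M ≠ ⊤ := by
  induction h with
  | of_subsingleton =>
    rename_i M _ _ _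
    have hsub : Subsingleton (Submodule R M) := by
      constructor
      intro p q
      ext y
      simp [Subsingleton.elim y 0]
    rw [rlength, Order.krullDim_nonpos_of_subsingleton.antisymm
      (Order.krullDim_nonneg)]
    simp
  | of_simple_quotient hfl ih =>
    rename_i N _
    rw [rlength_add N]
    refine WithTop.add_ne_top.mpr ⟨ih, ?_⟩
    exact fun hc => (by simp [hc] : ¬ ((⊤:ℕ∞) ≤ 1)) (hc ▸ rlength_le_one_of_simple)

lemma rlength_ne_top {M : Type*} [AddCommGroup M] [Module R M] [IsNoetherian R M]
    [IsArtinian R M] : rlength R M ≠ ⊤ :=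
  rlength_ne_top_of_isFiniteLength (isFiniteLength_iff_isNoetherian_isArtinian.mpr ⟨‹_›, ‹_›⟩)

end ModuleAux

section ArtinianAux

variable {R : Type*} [CommRing R]

lemma isArtinian_of_torsionBy {M : Type*} [AddCommGroup M] [Module R M] [Module.Finite R M]
    {I : Ideal R} (hart : IsArtinianRing (R ⧸ I)) (htor : ∀ r ∈ I, ∀ m : M, r • m = 0) :
    IsArtinian R M := by
  have hT : Module.IsTorsionBySet R M I := fun x r => htor r.1 r.2 x
  letI : Module (R ⧸ I) M := hT.module
  haveI : IsScalarTower R (R ⧸ I) M := hT.isScalarTower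
  haveI : Module.Finite (R ⧸ I) M := Module.Finite.of_restrictScalars_finite R (R ⧸ I) M
  haveI : IsArtinian (R ⧸ I) M := isArtinian_of_fg_of_artinian'
  -- transfer Artinianity along the surjection R → R ⧸ I
  set g : Submodule R M → Submodule (R ⧸ I) M := fun N =>
    { carrier := N
      add_mem' := fun ha hb => N.add_mem ha hb
      zero_mem' := N.zero_mem
      smul_mem' := by
        rintro c x hx
        obtain ⟨r, rfl⟩ := Ideal.Quotient.mk_surjective c
        have hc : (Ideal.Quotient.mk I r) • x = r • x := by
          rw [← Ideal.Quotient.algebraMap_eq, algebraMap_smul]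
        rw [hc]
        exact N.smul_mem r hx } with hg
  have hmono : StrictMono g := by
    intro N N' h
    rw [lt_iff_le_and_ne]
    constructor
    · intro y hy
      exact h.le hy
    · intro hc
      apply h.ne
      ext y
      exact ⟨fun hy => by exact (SetLike.ext_iff.mp hc y).mp hy,
             fun hy => by exact (SetLike.ext_iff.mp hc y).mpr hy⟩
  rw [isArtinian_iff]
  have hwf : WellFounded ((· < ·) : Submodule (R ⧸ I) M → Submodule (R ⧸ I) M → Prop) :=
    (isArtinian_iff _ _).mp ‹IsArtinian (R ⧸ I) M›
  exact Subrelation.wf (fun {a b} hab => hmono hab) (InvImage.wf g hwf)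

lemma isArtinian_of_pow_smul_eq_bot [IsNoetherianRing R] {I : Ideal R}
    (hart : IsArtinianRing (R ⧸ I)) :
    ∀ (n : ℕ) {M : Type u_100} [AddCommGroup M] [Module R M] [Module.Finite R M],
      I ^ n • (⊤ : Submodule R M) = ⊥ → IsArtinian R M := by
  intro n
  induction n with
  | zero =>
    intro M _ _ _ h
    rw [pow_zero, Ideal.one_eq_top, Submodule.top_smul] at h
    haveI : Subsingleton M := by
      constructor
      intro a b
      have ha : a ∈ (⊤ : Submodule R M) := trivial
      have hb : b ∈ (⊤ : Submodule R M) := trivial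
      rw [h] at ha hb
      simp only [Submodule.mem_bot] at ha hb
      rw [ha, hb]
    exact isArtinian_of_finite
  | succ n ih =>
    intro M _ _ _ h
    haveI : IsNoetherian R M := isNoetherian_of_isNoetherianRing_of_finite R M
    set N : Submodule R M := I ^ n • ⊤ with hN
    haveI : Module.Finite R N := Module.Finite.iff_fg.mpr (IsNoetherian.noetherian N)
    have hIN : ∀ r ∈ I, ∀ y : N, r • y = 0 := by
      intro r hr y
      have hmem : r • (y : M) ∈ I • N := Submodule.smul_mem_smul hr y.2
      have : I • N = ⊥ := by
        rw [hN, ← Submodule.smul_assoc, Ideal.smul_eq_mul, ← pow_succ']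
        exact h
      rw [this, Submodule.mem_bot] at hmem
      exact Subtype.ext (by simpa using hmem)
    haveI hartN : IsArtinian R N := isArtinian_of_torsionBy hart hIN
    have hQ : I ^ n • (⊤ : Submodule R (M ⧸ N)) = ⊥ := by
      rw [eq_bot_iff]
      refine Submodule.smul_le.mpr ?_
      intro r hr z _
      obtain ⟨m, rfl⟩ := Submodule.Quotient.mk_surjective N z
      have : r • Submodule.Quotient.mk (p := N) m = Submodule.Quotient.mk (r • m) := rfl
      rw [this, Submodule.mem_bot, Submodule.Quotient.mk_eq_zero]
      exact Submodule.smul_mem_smul hr trivial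
    haveI hartQ : IsArtinian R (M ⧸ N) := ih hQ
    exact isArtinian_of_range_eq_ker N.subtype N.mkQ
      (by rw [Submodule.range_subtype, Submodule.ker_mkQ])

end ArtinianAux

section DimOne

open IsLocalRing

lemma prime_eq_maximalIdeal {R : Type*} [CommRing R] [IsDomain R] [IsLocalRing R]
    (hdim : ringKrullDim R = 1) (p : Ideal R) (hp : p.IsPrime) (h0 : p ≠ ⊥) :
    p = maximalIdeal R := by
  have hpt : p ≠ ⊤ := hp.ne_top
  have hle : p ≤ maximalIdeal R := IsLocalRing.le_maximalIdeal hpt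
  by_contra hne
  have hlt : p < maximalIdeal R := lt_of_le_of_ne hle hne
  let P0 : PrimeSpectrum R := ⟨⊥, Ideal.bot_prime⟩
  let P1 : PrimeSpectrum R := ⟨p, hp⟩
  let P2 : PrimeSpectrum R := ⟨maximalIdeal R, (IsLocalRing.maximalIdeal.isMaximal R).isPrime⟩
  have h01 : P0 < P1 := by
    rw [← PrimeSpectrum.asIdeal_lt_asIdeal]
    exact bot_lt_iff_ne_bot.mpr h0
  have h12 : P1 < P2 := by
    rw [← PrimeSpectrum.asIdeal_lt_asIdeal]
    exact hlt
  let s : LTSeries (PrimeSpectrum R) :=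
    { length := 2
      toFun := ![P0, P1, P2]
      step := by
        intro i
        fin_cases i
        · simpa using h01
        · simpa using h12 }
  have hk := Order.LTSeries.length_le_krullDim s
  rw [show Order.krullDim (PrimeSpectrum R) = ringKrullDim R from rfl, hdim] at hk
  have hs : s.length = 2 := rfl
  rw [hs] at hk
  norm_num at hk

lemma radical_span_eq_maximalIdeal {R : Type*} [CommRing R] [IsDomain R] [IsLocalRing R]
    (hdim : ringKrullDim R = 1) {b : R} (hb0 : b ≠ 0) (hbu : ¬ IsUnit b) :
    (Ideal.span {b} : Ideal R).radical = maximalIdeal R := by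
  rw [Ideal.radical_eq_sInf]
  have hset : {J : Ideal R | Ideal.span {b} ≤ J ∧ J.IsPrime} = {maximalIdeal R} := by
    ext J
    simp only [Set.mem_setOf_eq, Set.mem_singleton_iff]
    constructor
    · rintro ⟨hle, hJ⟩
      refine prime_eq_maximalIdeal hdim J hJ ?_
      intro hbot
      apply hb0
      have : b ∈ J := hle (Ideal.subset_span rfl)
      rw [hbot] at this
      simpa using this
    · rintro rfl
      refine ⟨?_, (IsLocalRing.maximalIdeal.isMaximal R).isPrime⟩
      rw [Ideal.span_le, Set.singleton_subset_iff]
      exact hbu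
  rw [hset, sInf_singleton]

end DimOne

lemma artinianRing_of_field {F : Type*} [Field F] : IsArtinianRing F := inferInstance

lemma isArtinianRing_quot_maximal {R : Type*} [CommRing R] (I : Ideal R) [I.IsMaximal] :
    IsArtinianRing (R ⧸ I) :=
  @artinianRing_of_field _ (Ideal.Quotient.field I)

/-- For a one-dimensional Noetherian local domain `R` with reduced completion and
module-finite integral closure `R̄`, and any nonzero `x ∈ R`, `λ(R/xR) = λ(R̄/xR̄)`. -/
theorem stmt0 (R K : Type*) [CommRing R] [IsDomain R] [IsNoetherianRing R] [IsLocalRing R]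
    (hdim : ringKrullDim R = 1)
    [Field K] [Algebra R K] [IsFractionRing R K]
    (hred : IsReduced (AdicCompletion (maximalIdeal R) R))
    (hfin : Module.Finite R (integralClosure R K))
    (x : R) (hx : x ≠ 0) :
    rlength R (R ⧸ Ideal.span {x}) =
      rlength R ((integralClosure R K) ⧸
        (Ideal.span {algebraMap R (integralClosure R K) x})) := by
  haveI := hfin
  set A := integralClosure R K with hA
  -- injectivity facts
  have hinjRK : Function.Injective (algebraMap R K) := IsFractionRing.injective R K
  have hinjRA : Function.Injective (algebraMap R A) := fun a b hab => hinjRK (by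
    rw [IsScalarTower.algebraMap_apply R A K, IsScalarTower.algebraMap_apply R A K, hab])
  have hxA : algebraMap R A x ≠ 0 := fun hc => hx (hinjRA (by rw [hc, map_zero]))
  set ℓ : A →ₗ[R] A := LinearMap.lsmul R A x with hℓ
  have hℓ_apply : ∀ a : A, ℓ a = x • a := fun a => rfl
  have hinjℓ : Function.Injective ℓ := by
    intro a b hab
    rw [hℓ_apply, hℓ_apply, Algebra.smul_def, Algebra.smul_def] at hab
    exact mul_left_cancel₀ hxA hab
  set f₀ : R →ₗ[R] A := Algebra.linearMap R A with hf₀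
  have hinjf₀ : Function.Injective f₀ := hinjRA
  set S : Submodule R A := LinearMap.range f₀ with hS
  set p₀ : Submodule R A := S.map ℓ with hp₀
  set J : Submodule R A := LinearMap.range ℓ with hJ
  have hp₀S : p₀ ≤ S := by
    rintro _ ⟨s, hs, rfl⟩
    obtain ⟨r, rfl⟩ := hs
    refine ⟨x * r, ?_⟩
    rw [hℓ_apply]
    show algebraMap R A (x * r) = x • algebraMap R A r
    rw [map_mul, Algebra.smul_def]
  have hp₀J : p₀ ≤ J := by
    rintro _ ⟨s, _, rfl⟩
    exact ⟨s, rfl⟩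
  set e₀ : R ≃ₗ[R] S := LinearEquiv.ofInjective f₀ hinjf₀ with he₀
  set μ : A ≃ₗ[R] J := LinearEquiv.ofInjective ℓ hinjℓ with hμ
  -- Claim 1
  have me1 : Submodule.map (e₀ : R →ₗ[R] S) (Ideal.span {x} : Ideal R) = p₀.comap S.subtype := by
    ext z
    simp only [Submodule.mem_map, Submodule.mem_comap]
    constructor
    · rintro ⟨r, hr, rfl⟩
      obtain ⟨c, hc⟩ := Ideal.mem_span_singleton'.mp hr
      show ((e₀ r : S) : A) ∈ p₀
      have h1 : ((e₀ r : S) : A) = f₀ r := rfl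
      rw [h1, ← hc]
      refine ⟨f₀ c, ⟨c, rfl⟩, ?_⟩
      rw [hℓ_apply]
      show x • algebraMap R A c = algebraMap R A (c * x)
      rw [map_mul, Algebra.smul_def, mul_comm]
    · intro hz
      obtain ⟨s, hs, hsz⟩ := hz
      obtain ⟨c, rfl⟩ := hs
      refine ⟨c * x, Ideal.mem_span_singleton'.mpr ⟨c, rfl⟩, ?_⟩
      apply Subtype.ext
      have hsz' : ℓ (f₀ c) = (z : A) := hsz
      show f₀ (c * x) = (z : A)
      rw [← hsz', hℓ_apply]
      show algebraMap R A (c * x) = x • algebraMap R A c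
      rw [map_mul, Algebra.smul_def, mul_comm]
  have eq1 : rlength R (R ⧸ Ideal.span {x}) = rlength R (S ⧸ p₀.comap S.subtype) :=
    rlength_congr (Submodule.Quotient.equiv _ _ e₀ me1)
  -- Claim 2
  have me2 : Submodule.map (μ : A →ₗ[R] J) S = p₀.comap J.subtype := by
    ext z
    simp only [Submodule.mem_map, Submodule.mem_comap]
    constructor
    · rintro ⟨s, hs, rfl⟩
      exact ⟨s, hs, rfl⟩
    · rintro ⟨s, hs, hsz⟩
      exact ⟨s, hs, Subtype.ext hsz⟩
  have eq2 : rlength R (A ⧸ S) = rlength R (J ⧸ p₀.comap J.subtype) :=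
    rlength_congr (Submodule.Quotient.equiv _ _ μ me2)
  -- Claim 3
  have hJ' : (Ideal.span {algebraMap R A x}).restrictScalars R = J := by
    ext a
    simp only [Submodule.restrictScalars_mem]
    rw [Ideal.mem_span_singleton']
    constructor
    · rintro ⟨c, rfl⟩
      refine ⟨c, ?_⟩
      rw [hℓ_apply, Algebra.smul_def, mul_comm]
    · rintro ⟨c, rfl⟩
      refine ⟨c, ?_⟩
      rw [hℓ_apply, Algebra.smul_def, mul_comm]
  have eq3 : rlength R (A ⧸ Ideal.span {algebraMap R A x}) = rlength R (A ⧸ J) := by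
    refine (rlength_congr (Submodule.Quotient.restrictScalarsEquiv R
      (Ideal.span {algebraMap R A x})).symm).trans ?_
    exact rlength_congr (Submodule.quotEquivOfEq _ _ hJ')
  -- chains
  have E1 := rlength_quot_chain p₀ S hp₀S
  have E2 := rlength_quot_chain p₀ J hp₀J
  -- finiteness of rlength R (A ⧸ S)
  obtain ⟨sgen, hsgen⟩ := Module.finite_def.mp hfin
  obtain ⟨b, hb⟩ := IsLocalization.exist_integer_multiples (nonZeroDivisors R) sgen
    (fun a : A => (a : K))
  have hb0 : (b : R) ≠ 0 := nonZeroDivisors.ne_zero b.2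
  have hbS : ∀ a : A, (b : R) • a ∈ S := by
    have key : ∀ a ∈ Submodule.span R (sgen : Set A), (b : R) • a ∈ S := by
      intro a ha
      induction ha using Submodule.span_induction with
      | mem g hg =>
        obtain ⟨r, hr⟩ := hb g hg
        refine ⟨r, ?_⟩
        apply Subtype.ext
        show ((f₀ r : A) : K) = (((b : R) • g : A) : K)
        rw [show ((f₀ r : A) : K) = algebraMap R K r from
          (IsScalarTower.algebraMap_apply R A K r).symm,
          show (((b : R) • g : A) : K) = (b : R) • (g : K) from rfl, hr]
      | zero => simp
      | add a1 a2 _ _ h1 h2 => rw [smul_add]; exact S.add_mem h1 h2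
      | smul r a1 _ h1 => rw [smul_comm]; exact S.smul_mem r h1
    intro a
    exact key a (by rw [hsgen]; trivial)
  haveI hNoethAS : IsNoetherian R (A ⧸ S) := inferInstance
  haveI hFinAS : Module.Finite R (A ⧸ S) :=
    Module.Finite.of_surjective S.mkQ (Submodule.mkQ_surjective S)
  have hArtAS : IsArtinian R (A ⧸ S) := by
    by_cases hbu : IsUnit (b : R)
    · haveI : Subsingleton (A ⧸ S) := by
        rw [Submodule.Quotient.subsingleton_iff]
        rw [Submodule.eq_top_iff']
        intro a
        have h1 : ((hbu.unit⁻¹ : Rˣ) : R) * (b : R) = 1 := hbu.val_inv_mul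
        have := hbS (((hbu.unit⁻¹ : Rˣ) : R) • a)
        rwa [smul_smul, mul_comm, h1, one_smul] at this
      exact isArtinian_of_finite
    · have hrad : (Ideal.span {(b : R)}).radical = maximalIdeal R :=
        radical_span_eq_maximalIdeal hdim hb0 hbu
      obtain ⟨n, hn⟩ := Ideal.exists_radical_pow_le_of_fg (Ideal.span {(b : R)})
        (IsNoetherian.noetherian _)
      rw [hrad] at hn
      have hart : IsArtinianRing (R ⧸ maximalIdeal R) :=
        isArtinianRing_quot_maximal _
      refine isArtinian_of_pow_smul_eq_bot hart n ?_
      rw [eq_bot_iff]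
      refine Submodule.smul_le.mpr ?_
      intro r hr z _
      have hrb : r ∈ Ideal.span {(b : R)} := hn hr
      obtain ⟨c, hc⟩ := Ideal.mem_span_singleton'.mp hrb
      obtain ⟨a, rfl⟩ := Submodule.Quotient.mk_surjective S z
      rw [← Submodule.Quotient.mk_smul, Submodule.mem_bot, Submodule.Quotient.mk_eq_zero]
      rw [← hc, mul_smul]
      exact S.smul_mem c (hbS a)
  haveI := hArtAS
  have hfinS : rlength R (A ⧸ S) ≠ ⊤ := rlength_ne_top
  -- conclude
  rw [eq1, eq3]
  have E3 : rlength R (S ⧸ p₀.comap S.subtype) + rlength R (A ⧸ S) =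
      rlength R (A ⧸ J) + rlength R (A ⧸ S) := by
    rw [← E1, E2, ← eq2, add_comm]
  exact WithTop.add_right_cancel hfinS E3
end

section
/- Let R be a reduced Noetherian ring with total ring of fractions K and module-finite integral closure R̄, and let 𝔠 = R:_K R̄ be the conductor. Then R̄ = R:_K 𝔠. -/
set_option synthInstance.maxHeartbeats 1000000
set_option maxHeartbeats 1000000

open IsLocalRing

/-- Determinant trick: if `x : K` multiplies a f.g. `R`-submodule `N` of `K` into itself,
and `N` contains a unit, then `x` is integral over `R`. -/
lemma aux_integral {R K : Type*} [CommRing R] [CommRing K] [Algebra R K]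
    (N : Submodule R K) (hN' : N.FG) (d : K) (hd : d ∈ N) (hdu : IsUnit d)
    (x : K) (hx : ∀ n ∈ N, x • n ∈ N) : IsIntegral R x := by
  let A' : Subalgebra R K :=
    { carrier := { x | ∀ n ∈ N, x • n ∈ N }
      mul_mem' := fun {a b} ha hb n hn => smul_smul a b n ▸ ha _ (hb _ hn)
      one_mem' := fun n hn => (one_smul K n).symm ▸ hn
      add_mem' := fun {a b} ha hb n hn => (add_smul a b n).symm ▸ N.add_mem (ha _ hn) (hb _ hn)
      zero_mem' := fun n _hn => (zero_smul K n).symm ▸ N.zero_mem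
      algebraMap_mem' := fun r n hn => (algebraMap_smul K r n).symm ▸ N.smul_mem r hn }
  let f : A' →ₐ[R] Module.End R N :=
    AlgHom.ofLinearMap
      { toFun := fun x => (DistribMulAction.toLinearMap R K x).restrict x.prop
        map_add' := fun x y => LinearMap.ext fun n => Subtype.ext <| add_smul (x : K) (y : K) (n : K)
        map_smul' := fun r s => LinearMap.ext fun n => Subtype.ext <| smul_assoc r (s : K) (n : K) }
      (LinearMap.ext fun n => Subtype.ext <| one_smul K (n : K))
      (fun x y => LinearMap.ext fun n => Subtype.ext <| mul_smul (x : K) (y : K) (n : K))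
  have hinj : Function.Injective f := by
    show Function.Injective f.toLinearMap
    rw [injective_iff_map_eq_zero]
    intro s hs
    have h0 : s.1 • d = 0 := congr_arg Subtype.val (LinearMap.congr_fun hs ⟨d, hd⟩)
    have hs0 : s.1 = 0 := by
      refine hdu.mul_left_cancel ?_
      rw [mul_zero, mul_comm]
      rwa [smul_eq_mul] at h0
    exact Subtype.ext hs0
  show IsIntegral R (A'.val ⟨x, hx⟩)
  rw [isIntegral_algHom_iff A'.val Subtype.val_injective, ← isIntegral_algHom_iff (B := Module.End R N) f hinj]
  haveI : Module.Finite R N := by rwa [Module.finite_def, Submodule.fg_top]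
  apply Algebra.IsIntegral.isIntegral

/-- for a reduced Noetherian ring with total quotient ring `K` and module-finite
integral closure `R̄`, with conductor `𝔠 = R :_K R̄`, one has `R̄ = R :_K 𝔠`. -/
theorem stmt3 (R K : Type*) [CommRing R] [IsReduced R] [IsNoetherianRing R]
    [CommRing K] [Algebra R K] [IsFractionRing R K]
    (hfin : Module.Finite R (integralClosure R K)) :
    ∀ α : K, α ∈ integralClosure R K ↔
      (∀ γ : K, (∀ β ∈ integralClosure R K, ∃ r : R, algebraMap R K r = γ * β) →
        ∃ r : R, algebraMap R K r = α * γ) := by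
  -- the conductor as a submodule of K
  set 𝔠 : Submodule R K :=
    { carrier := {γ | ∀ β ∈ integralClosure R K, ∃ r : R, algebraMap R K r = γ * β}
      zero_mem' := fun β _ => ⟨0, by simp⟩
      add_mem' := by
        rintro a b ha hb β hβ
        obtain ⟨r₁, h₁⟩ := ha β hβ
        obtain ⟨r₂, h₂⟩ := hb β hβ
        exact ⟨r₁ + r₂, by rw [map_add, h₁, h₂, add_mul]⟩
      smul_mem' := by
        rintro c a ha β hβ
        obtain ⟨r, hr⟩ := ha β hβ
        exact ⟨c * r, by rw [map_mul, hr, Algebra.smul_def, mul_assoc]⟩ } with h𝔠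
  have mem𝔠 : ∀ γ : K, γ ∈ 𝔠 ↔
      (∀ β ∈ integralClosure R K, ∃ r : R, algebraMap R K r = γ * β) := fun γ => Iff.rfl
  intro α
  constructor
  · intro hα γ hγ
    obtain ⟨r, hr⟩ := hγ α hα
    exact ⟨r, by rw [hr, mul_comm]⟩
  · intro h
    -- find a common denominator d for the integral closure
    have hfg : (Subalgebra.toSubmodule (integralClosure R K)).FG := by
      exact (Submodule.fg_top _).mp (Module.finite_def.mp hfin)
    obtain ⟨t, ht⟩ := hfg
    obtain ⟨b, hb⟩ := IsLocalization.exist_integer_multiples_of_finset (nonZeroDivisors R) t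
    set d : K := algebraMap R K b with hd
    have hdmem : d ∈ 𝔠 := by
      intro β hβ
      have hβ' : β ∈ Submodule.span R (t : Set K) := by
        rw [ht]; exact hβ
      have : IsLocalization.IsInteger R ((b : R) • β) := by
        refine Submodule.span_induction ?_ ?_ ?_ ?_ hβ'
        · intro x hx; exact hb x hx
        · rw [smul_zero]; exact IsLocalization.isInteger_zero
        · intro x y _ _ hx hy; rw [smul_add]; exact IsLocalization.isInteger_add hx hy
        · intro c x _ hx
          rw [smul_comm]
          exact IsLocalization.isInteger_smul hx
      obtain ⟨r, hr⟩ := this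
      exact ⟨r, by rw [hr, Algebra.smul_def]⟩
    have hdu : IsUnit d := IsLocalization.map_units K b
    -- 𝔠 is finitely generated
    have h𝔠fg : 𝔠.FG := by
      have hle : 𝔠 = Submodule.map (Algebra.linearMap R K)
          (Submodule.comap (Algebra.linearMap R K) 𝔠) := by
        apply le_antisymm
        · intro γ hγ
          obtain ⟨r, hr⟩ := hγ 1 (one_mem _)
          rw [mul_one] at hr
          exact ⟨r, by simpa [hr] using hγ, hr⟩
        · exact Submodule.map_comap_le _ _
      rw [hle]
      exact (IsNoetherian.noetherian _).map _
    -- α multiplies 𝔠 into itself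
    have hstab : ∀ n ∈ 𝔠, α • n ∈ 𝔠 := by
      intro γ hγ β hβ
      have hγβ : γ * β ∈ 𝔠 := by
        intro β' hβ'
        obtain ⟨r, hr⟩ := hγ (β * β') (mul_mem hβ hβ')
        exact ⟨r, by rw [hr, mul_assoc]⟩
      obtain ⟨r, hr⟩ := h (γ * β) hγβ
      exact ⟨r, by rw [hr, smul_eq_mul, mul_assoc]⟩
    exact aux_integral 𝔠 h𝔠fg d hdmem hdu α hstab
end

section
/- Let R be a zero-dimensional (Artinian) local ring with injective hull E of its residue field, and let J be an ideal of R. Then the annihilator of E/JE equals 0 :_R (0 :_R J). -/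
set_option synthInstance.maxHeartbeats 1000000
set_option maxHeartbeats 1000000

open IsLocalRing

universe u v w

/-- `E` is an injective hull of the residue field over the local ring `A`: it is injective and
an essential extension of a simple submodule. -/
def IsInjectiveHullOfSimple (A E : Type*) [CommRing A] [AddCommGroup E] [Module A E] : Prop :=
  Module.Injective A E ∧ ∃ S : Submodule A E, IsSimpleModule A S ∧
    ∀ N : Submodule A E, N ≠ ⊥ → N ⊓ S ≠ ⊥

lemma noeth_of_killed {R : Type u} [CommRing R] [IsLocalRing R] {M : Type u}
    [AddCommGroup M] [Module R M] [IsArtinian R M]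
    (h : ∀ a ∈ maximalIdeal R, ∀ x : M, a • x = 0) : IsNoetherian R M := by
  set k := R ⧸ maximalIdeal R
  letI : Field k := Ideal.Quotient.field (maximalIdeal R)
  have hT : Module.IsTorsionBySet R M (maximalIdeal R : Set R) := fun x a => h a.1 a.2 x
  letI : Module k M := hT.module
  haveI : IsScalarTower R k M := hT.isScalarTower
  haveI : IsArtinian k M := isArtinian_of_tower R inferInstance
  haveI : Finite (Module.Basis.ofVectorSpaceIndex k M) := by
    have := IsArtinian.finite_of_linearIndependent (R := k) (M := M)
      (Module.Basis.ofVectorSpaceIndex.linearIndependent k M)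
    exact this
  haveI : Module.Finite k M := Module.Finite.of_basis (Module.Basis.ofVectorSpace k M)
  haveI : IsNoetherian k M := IsNoetherian.iff_fg.mpr inferInstance
  -- transfer Noetherianity from k down to R: every R-submodule is a k-submodule
  let f : Submodule R M ↪o Submodule k M :=
    { toFun := fun p =>
        { carrier := p
          add_mem' := fun ha hb => p.add_mem ha hb
          zero_mem' := p.zero_mem
          smul_mem' := by
            intro c x hx
            obtain ⟨r, rfl⟩ := Ideal.Quotient.mk_surjective c
            rw [hT.mk_smul]
            exact p.smul_mem r hx }
      inj' := by
        intro p q hpq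
        ext x
        exact SetLike.ext_iff.mp hpq x
      map_rel_iff' := Iff.rfl }
  exact isNoetherian_mk ⟨(f.dual.ltEmbedding).wellFounded (IsNoetherian.wf ‹IsNoetherian k M›)⟩

lemma noetherianRing_of_artinian_local (R : Type u) [CommRing R] [IsArtinianRing R]
    [IsLocalRing R] : IsNoetherianRing R := by
  obtain ⟨n, hn⟩ := IsArtinianRing.isNilpotent_jacobson_bot (R := R)
  rw [IsLocalRing.jacobson_eq_maximalIdeal (⊥ : Ideal R) bot_ne_top] at hn
  have key : ∀ i : ℕ, IsNoetherian R (R ⧸ (maximalIdeal R ^ i : Ideal R)) := by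
    intro i
    induction i with
    | zero =>
      have : Subsingleton (R ⧸ (maximalIdeal R ^ 0 : Ideal R)) := by
        rw [pow_zero, Ideal.one_eq_top]
        exact Submodule.Quotient.subsingleton_iff.mpr rfl
      infer_instance
    | succ i ih =>
      set Q : Ideal R := maximalIdeal R ^ (i+1) with hQ
      set P : Ideal R := maximalIdeal R ^ i with hP
      have hQP : Q ≤ P := Ideal.pow_le_pow_right (Nat.le_succ i)
      set N : Submodule R (R ⧸ Q) := Submodule.map ((Q : Submodule R R)).mkQ P with hN
      rw [isNoetherian_iff_submodule_quotient N]
      constructor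
      · refine noeth_of_killed ?_
        rintro a ha ⟨x, hx⟩
        obtain ⟨y, hy, rfl⟩ := hx
        refine Subtype.ext ?_
        show a • (Submodule.mkQ _ y) = 0
        rw [← map_smul, Submodule.mkQ_apply, Submodule.Quotient.mk_eq_zero]
        show a • y ∈ Q
        rw [smul_eq_mul, hQ, pow_succ']
        exact Ideal.mul_mem_mul ha hy
      · have e := Submodule.quotientQuotientEquivQuotient
          (Q : Submodule R R) (P : Submodule R R) hQP
        exact isNoetherian_of_linearEquiv e.symm
  have := key n
  rw [hn] at this
  exact isNoetherian_of_linearEquiv (Submodule.quotEquivOfEqBot (⊥ : Submodule R R) rfl)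

-- small_of_fg: finite module killed by maximal ideal, with small residue field
lemma small_of_fg (R : Type u) [CommRing R] [IsLocalRing R] (M : Type u)
    [AddCommGroup M] [Module R M] [Module.Finite R M]
    [Small.{v} (R ⧸ maximalIdeal R)]
    (h : ∀ a ∈ maximalIdeal R, ∀ x : M, a • x = 0) : Small.{v} M := by
  obtain ⟨n, s, hs⟩ := Module.Finite.exists_fin (R := R) (M := M)
  set q : R → R ⧸ maximalIdeal R := Submodule.Quotient.mk
  have hq : Function.Surjective q := Submodule.Quotient.mk_surjective _
  let F : (Fin n → R ⧸ maximalIdeal R) → M := fun c => ∑ i, (Function.surjInv hq (c i)) • s i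
  have hF : Function.Surjective F := by
    intro x
    have hx : x ∈ Submodule.span R (Set.range s) := hs ▸ Submodule.mem_top
    rw [Submodule.mem_span_range_iff_exists_fun] at hx
    obtain ⟨c, hc⟩ := hx
    refine ⟨fun i => q (c i), ?_⟩
    rw [← hc]
    refine Finset.sum_congr rfl fun i _ => ?_
    have h1 : q (Function.surjInv hq (q (c i))) = q (c i) := Function.surjInv_eq hq _
    have h2 : Function.surjInv hq (q (c i)) - c i ∈ maximalIdeal R :=
      (Submodule.Quotient.eq _).mp h1
    have h3 := h _ h2 (s i)
    rw [sub_smul] at h3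
    exact sub_eq_zero.mp h3
  exact small_of_surjective hF

lemma small_ext {R : Type u} [Ring R] {M : Type u} [AddCommGroup M] [Module R M]
    (N : Submodule R M) [Small.{v} N] [Small.{v} (M ⧸ N)] : Small.{v} M := by
  have hq : Function.Surjective (N.mkQ) := Submodule.mkQ_surjective N
  let s : (M ⧸ N) → M := Function.surjInv hq
  let F : M → (M ⧸ N) × N := fun m => ⟨N.mkQ m, ⟨m - s (N.mkQ m), by
    rw [← Submodule.Quotient.mk_eq_zero]
    show N.mkQ _ = 0
    rw [map_sub]
    simp [s, Function.surjInv_eq hq]⟩⟩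
  have hF : Function.Injective F := by
    intro a b hab
    obtain ⟨h1, h2⟩ := Prod.mk.injEq .. ▸ hab
    have h2' : a - s (N.mkQ a) = b - s (N.mkQ b) := congrArg Subtype.val h2
    rw [h1] at h2'
    exact sub_left_injective h2'
  exact small_of_injective hF

lemma small_R (R : Type u) [CommRing R] [IsArtinianRing R] [IsLocalRing R]
    [Small.{v} (R ⧸ maximalIdeal R)] : Small.{v} R := by
  haveI : IsNoetherianRing R := noetherianRing_of_artinian_local R
  obtain ⟨n, hn⟩ := IsArtinianRing.isNilpotent_jacobson_bot (R := R)
  rw [IsLocalRing.jacobson_eq_maximalIdeal (⊥ : Ideal R) bot_ne_top] at hn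
  have key : ∀ i : ℕ, Small.{v} (R ⧸ (maximalIdeal R ^ i : Ideal R)) := by
    intro i
    induction i with
    | zero =>
      have : Subsingleton (R ⧸ (maximalIdeal R ^ 0 : Ideal R)) := by
        rw [pow_zero, Ideal.one_eq_top]
        exact Submodule.Quotient.subsingleton_iff.mpr rfl
      infer_instance
    | succ i ih =>
      set Q : Ideal R := maximalIdeal R ^ (i+1) with hQ
      set P : Ideal R := maximalIdeal R ^ i with hP
      have hQP : Q ≤ P := Ideal.pow_le_pow_right (Nat.le_succ i)
      set N : Submodule R (R ⧸ Q) := Submodule.map ((Q : Submodule R R)).mkQ P with hNdef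
      have e := Submodule.quotientQuotientEquivQuotient
        (Q : Submodule R R) (P : Submodule R R) hQP
      haveI : Small.{v} ((R ⧸ Q) ⧸ N) := small_of_injective e.injective
      haveI : Small.{v} N := by
        haveI : Module.Finite R N := Module.Finite.iff_fg.mpr (IsNoetherian.noetherian N)
        refine small_of_fg R N ?_
        rintro a ha ⟨x, hx⟩
        obtain ⟨y, hy, rfl⟩ := hx
        refine Subtype.ext ?_
        show a • (Submodule.mkQ _ y) = 0
        rw [← map_smul, Submodule.mkQ_apply, Submodule.Quotient.mk_eq_zero]
        show a • y ∈ Q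
        rw [smul_eq_mul, hQ, pow_succ']
        exact Ideal.mul_mem_mul ha hy
      exact small_ext N
  have := key n
  rw [hn] at this
  exact small_of_injective (Submodule.quotEquivOfEqBot (⊥ : Submodule R R) rfl).symm.injective

lemma simple_equiv_residue {R : Type u} [CommRing R] [IsLocalRing R] (M : Type v)
    [AddCommGroup M] [Module R M] [IsSimpleModule R M] :
    Nonempty ((R ⧸ maximalIdeal R) ≃ₗ[R] M) := by
  have : Nontrivial M := IsSimpleModule.nontrivial R M
  obtain ⟨m, hm⟩ := exists_ne (0 : M)
  have hmax := IsSimpleModule.ker_toSpanSingleton_isMaximal R hm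
  have h := IsLocalRing.eq_maximalIdeal hmax
  exact ⟨h ▸ (LinearMap.quotKerEquivOfSurjective _
    (IsSimpleModule.toSpanSingleton_surjective R hm))⟩

lemma aux_small (R : Type u) [CommRing R] [IsArtinianRing R] [IsLocalRing R]
    (E : Type v) [AddCommGroup E] [Module R E] (hE : IsInjectiveHullOfSimple R E) :
    Small.{v} R := by
  obtain ⟨inj, S, hS, hess⟩ := hE
  haveI := hS
  obtain ⟨e⟩ := simple_equiv_residue (R := R) S
  haveI : Small.{v} (R ⧸ maximalIdeal R) :=
    small_of_injective (f := fun x => ((e x : S) : E))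
      (fun a b h => e.injective (Subtype.ext h))
  exact small_R R

lemma aux_faithful (R : Type u) [CommRing R] [IsArtinianRing R] [IsLocalRing R]
    (E : Type v) [AddCommGroup E] [Module R E] (hE : IsInjectiveHullOfSimple R E)
    (r : R) (hr : ∀ x : E, r • x = 0) : r = 0 := by
  obtain ⟨inj, S, hS, hess⟩ := hE
  haveI := hS
  haveI : Small.{v} R := aux_small R E ⟨inj, S, hS, hess⟩
  by_contra hne
  have hspan : Ideal.span {r} ≠ ⊥ := by
    simpa [Ideal.span_singleton_eq_bot] using hne
  haveI : IsAtomic (Submodule R R) := isAtomic_of_orderBot_wellFounded_lt wellFounded_lt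
  obtain ⟨T, hT, hTle⟩ :=
    (IsAtomic.eq_bot_or_exists_atom_le (Ideal.span {r})).resolve_left hspan
  haveI : IsSimpleModule R T := isSimpleModule_iff_isAtom.mpr hT
  obtain ⟨eT⟩ := simple_equiv_residue (R := R) T
  obtain ⟨eS⟩ := simple_equiv_residue (R := R) S
  let ψ : T →ₗ[R] E := S.subtype ∘ₗ (eT.symm.trans eS).toLinearMap
  have hψinj : Function.Injective ψ :=
    Subtype.val_injective.comp (eT.symm.trans eS).injective
  obtain ⟨φ, hφ⟩ := Module.Injective.extension_property R E T R
    ((T : Submodule R R)).subtype (Submodule.injective_subtype T) ψ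
  haveI : Nontrivial T := IsSimpleModule.nontrivial R T
  obtain ⟨t, ht0⟩ := exists_ne (0 : T)
  have h1 : φ (t : R) = ψ t := LinearMap.congr_fun hφ t
  have h2 : ψ t ≠ 0 := fun h => ht0 (hψinj (h.trans (map_zero ψ).symm))
  obtain ⟨s, hs⟩ := Ideal.mem_span_singleton'.mp (hTle t.2)
  have h3 : φ (t : R) = 0 := by
    rw [← hs, ← smul_eq_mul, map_smul, ← mul_one r, ← smul_eq_mul, map_smul, hr (φ 1),
      smul_zero]
  exact h2 (h1 ▸ h3)

lemma aux_divisible (R : Type u) [CommRing R] [IsArtinianRing R] [IsLocalRing R]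
    (E : Type v) [AddCommGroup E] [Module R E] (hE : IsInjectiveHullOfSimple R E)
    (J : Ideal R) (x : E)
    (hx : ∀ s ∈ Submodule.colon (⊥ : Ideal R) J, s • x = 0) :
    x ∈ J • (⊤ : Submodule R E) := by
  haveI : IsNoetherianRing R := noetherianRing_of_artinian_local R
  haveI : Small.{v} R := aux_small R E hE
  haveI : Module.Injective R E := hE.1
  obtain ⟨n, a, hspan⟩ := Submodule.fg_iff_exists_fin_generating_family.mp
    (IsNoetherian.noetherian J)
  have haJ : ∀ i, a i ∈ J := fun i => hspan ▸ Submodule.subset_span ⟨i, rfl⟩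
  set A : Ideal R := Submodule.colon (⊥ : Ideal R) J with hA
  -- the test map R → R^n
  let φ : R →ₗ[R] (Fin n → R) := LinearMap.pi fun i =>
    { toFun := fun r => r * a i
      map_add' := fun p q => add_mul p q (a i)
      map_smul' := fun p q => by simp [smul_eq_mul, mul_assoc] }
  have hkerφ : A ≤ LinearMap.ker φ → True := fun _ => trivial
  -- f : R/A → E
  have hfle : A ≤ LinearMap.ker (LinearMap.toSpanSingleton R E x) := by
    intro s hsA
    simpa [LinearMap.mem_ker, LinearMap.toSpanSingleton_apply] using hx s hsA
  let f : (R ⧸ A) →ₗ[R] E := Submodule.liftQ A (LinearMap.toSpanSingleton R E x) hfle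
  have hφle : A ≤ LinearMap.ker φ := by
    intro s hsA
    rw [LinearMap.mem_ker]
    funext i
    show s * a i = 0
    have := Submodule.mem_colon.mp hsA (a i) (haJ i)
    simpa [smul_eq_mul] using this
  let φbar : (R ⧸ A) →ₗ[R] (Fin n → R) := Submodule.liftQ A φ hφle
  have hφbarinj : Function.Injective φbar := by
    rw [← LinearMap.ker_eq_bot]
    rw [Submodule.ker_liftQ_eq_bot]
    intro s hs
    rw [LinearMap.mem_ker] at hs
    have key : ∀ p ∈ Submodule.span R (Set.range a), s * p = 0 := by
      intro p hp
      induction hp using Submodule.span_induction with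
      | mem y hy =>
        obtain ⟨i, rfl⟩ := hy
        exact congrFun hs i
      | zero => simp
      | add y z _ _ hy hz => rw [mul_add, hy, hz, add_zero]
      | smul c y _ hy => rw [smul_eq_mul, ← mul_assoc, mul_comm s c, mul_assoc, hy, mul_zero]
    rw [hA, Submodule.mem_colon]
    intro p hp
    rw [Submodule.mem_bot, smul_eq_mul]
    exact key p (hspan ▸ hp)
  obtain ⟨g, hg⟩ := Module.Injective.extension_property R E (R ⧸ A) (Fin n → R)
    φbar hφbarinj f
  have hx1 : g (φbar (Submodule.Quotient.mk 1)) = x := by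
    have h := LinearMap.congr_fun hg (Submodule.Quotient.mk (1 : R))
    rw [LinearMap.comp_apply] at h
    have hf1 : f (Submodule.Quotient.mk (1 : R)) = x := by
      show Submodule.liftQ A _ hfle (Submodule.Quotient.mk 1) = x
      rw [Submodule.liftQ_apply, LinearMap.toSpanSingleton_apply, one_smul]
    exact h.trans hf1
  have hφbar1 : φbar (Submodule.Quotient.mk 1) = fun i => a i := by
    show φ 1 = _
    funext i
    show 1 * a i = a i
    rw [one_mul]
  rw [← hx1, hφbar1]
  have : (fun i => a i) = ∑ i, Pi.single i (a i) := by
    rw [Finset.univ_sum_single]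
  rw [this, map_sum]
  refine Submodule.sum_mem _ fun i _ => ?_
  have : (Pi.single i (a i) : Fin n → R) = a i • (Pi.single i 1 : Fin n → R) := by
    rw [← Pi.single_smul, smul_eq_mul, mul_one]
  rw [this, map_smul]
  exact Submodule.smul_mem_smul (haJ i) Submodule.mem_top

/-- over an Artinian local ring `R` with `E` the injective hull of the residue
field, for any ideal `J` one has `Ann_R(E/JE) = 0 :_R (0 :_R J)`. -/
theorem stmt6 (R : Type*) [CommRing R] [IsArtinianRing R] [IsLocalRing R]
    (E : Type*) [AddCommGroup E] [Module R E] (hE : IsInjectiveHullOfSimple R E)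
    (J : Ideal R) :
    (⊤ : Submodule R (E ⧸ (J • (⊤ : Submodule R E)))).annihilator =
      Submodule.colon (⊥ : Ideal R) (Submodule.colon (⊥ : Ideal R) J) := by
  ext r
  rw [Submodule.mem_annihilator, Submodule.mem_colon]
  constructor
  · intro h s hs
    rw [Submodule.mem_bot, smul_eq_mul]
    refine aux_faithful R E hE (r * s) fun x => ?_
    have h1 : r • x ∈ J • (⊤ : Submodule R E) := by
      have := h (Submodule.Quotient.mk x) Submodule.mem_top
      rwa [← Submodule.Quotient.mk_smul, Submodule.Quotient.mk_eq_zero] at this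
    -- s kills J • ⊤
    have h2 : ∀ y ∈ J • (⊤ : Submodule R E), s • y = 0 := by
      intro y hy
      refine Submodule.smul_induction_on hy ?_ ?_
      · intro a ha z hz
        rw [smul_smul]
        have hsa : s * a = 0 := by
          have := Submodule.mem_colon.mp hs a ha
          simpa [smul_eq_mul] using this
        rw [hsa, zero_smul]
      · intro y1 y2 h1 h2
        rw [smul_add, h1, h2, add_zero]
    rw [mul_comm, mul_smul]
    exact h2 _ h1
  · intro h q _
    obtain ⟨x, rfl⟩ := Submodule.Quotient.mk_surjective _ q
    rw [← Submodule.Quotient.mk_smul, Submodule.Quotient.mk_eq_zero]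
    refine aux_divisible R E hE J (r • x) fun s hs => ?_
    have : r • s ∈ (⊥ : Ideal R) := h s hs
    rw [Submodule.mem_bot, smul_eq_mul] at this
    rw [smul_smul, mul_comm s r, this, zero_smul]
end

section
/- Let R be a Noetherian one-dimensional local domain with reduced completion, and let I be a trace ideal of R (i.e., I = tr_R(M) for some module M, equivalently I = tr_R(I)). Then every ideal J isomorphic to I satisfies λ(R/J) ≥ λ(R/I); i.e., a regular trace ideal achieves minimal colength among its isomorphic copies. -/
set_option synthInstance.maxHeartbeats 1000000
set_option maxHeartbeats 1000000

open IsLocalRing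

theorem unbot'_mono {a b : WithBot ℕ∞} (h : a ≤ b) :
    WithBot.unbotD 0 a ≤ WithBot.unbotD 0 b := by
  induction a using WithBot.recBotCoe with
  | bot => simp
  | coe n =>
    induction b using WithBot.recBotCoe with
    | bot => simp at h
    | coe m => simpa using h

/-- over a one-dimensional Noetherian local domain with reduced completion, a
non-zero trace ideal `I` (i.e. `I = tr_R(I)`) achieves the minimal colength among all ideals
isomorphic to it. -/
theorem stmt9 (R : Type*) [CommRing R] [IsDomain R] [IsNoetherianRing R] [IsLocalRing R]
    (hdim : ringKrullDim R = 1)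
    (hred : IsReduced (AdicCompletion (maximalIdeal R) R))
    (I : Ideal R) (hI : I ≠ ⊥)
    (htr : I = ⨆ f : I →ₗ[R] R, LinearMap.range f)
    (J : Ideal R) (hiso : Nonempty (J ≃ₗ[R] I)) :
    rlength R (R ⧸ I) ≤ rlength R (R ⧸ J) := by
  obtain ⟨e⟩ := hiso
  -- the composite I ≃ J ↪ R is a linear map with range J, so J ≤ tr(I) = I
  set g : I →ₗ[R] R := J.subtype ∘ₗ (e.symm : I →ₗ[R] J) with hg
  have hJI : J ≤ I := by
    conv_rhs => rw [htr]
    refine le_trans ?_ (le_iSup (fun f : I →ₗ[R] R => LinearMap.range f) g)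
    intro x hx
    exact ⟨e ⟨x, hx⟩, by simp [hg]⟩
  -- quotient map R/J → R/I
  let π : (R ⧸ J) →ₗ[R] (R ⧸ I) := Submodule.mapQ J I LinearMap.id hJI
  have hπ : Function.Surjective π := by
    intro y
    obtain ⟨x, rfl⟩ := Submodule.Quotient.mk_surjective I y
    exact ⟨Submodule.Quotient.mk x, rfl⟩
  have hcomap : StrictMono (Submodule.comap π) :=
    Monotone.strictMono_of_injective (fun a b hab => Submodule.comap_mono hab)
      (Submodule.comap_injective_of_surjective hπ)
  have hkd := Order.krullDim_le_of_strictMono _ hcomap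
  unfold rlength
  exact unbot'_mono hkd
end

section
/- Let k be a perfect field, S = k[[X_1,...,X_n]] with n ≥ 2, and R = S/I a one-dimensional complete local domain with I ⊆ n^{s+1} for some s ≥ 1, where n is the maximal ideal of S. Suppose the universally finite module of differentials Ω_{R/k} is torsion-free and J is an ideal of R with Ω_{R/k} ≅ J (equivalently J realizes Ω_{R/k}). Then J ⊆ m^s, where m is the maximal ideal of R. -/
set_option synthInstance.maxHeartbeats 1000000
set_option maxHeartbeats 1000000

open IsLocalRing

/-- The universally finite module of differentials of `R = k[[X_1,…,X_n]]/I`, encoded via its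
presentation `R^p → R^n → Ω → 0` by the (transposed) Jacobian matrix `A = (∂f_j/∂X_i)`. -/
abbrev OmegaOf (R : Type*) [CommRing R] {n p : ℕ} (A : Matrix (Fin n) (Fin p) R) :=
  (Fin n → R) ⧸ LinearMap.range (Matrix.toLin' A)

/-- in Berger's setting (`I ⊆ 𝔫^{s+1}`, so all entries of the Jacobian
presentation matrix of `Ω_{R/k}` lie in `m^s`), if `Ω_{R/k}` is torsion-free and `J` is an
ideal with `Ω_{R/k} ≅ J`, then `J ⊆ m^s`. -/
theorem stmt15 (R : Type*) [CommRing R] [IsDomain R] [IsNoetherianRing R] [IsLocalRing R]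
    (hdim : ringKrullDim R = 1)
    (n p s : ℕ) (hn : 2 ≤ n) (hs : 1 ≤ s)
    (A : Matrix (Fin n) (Fin p) R)
    (hA : ∀ i j, A i j ∈ (maximalIdeal R) ^ s)
    (htf : Submodule.torsion R (OmegaOf R A) = ⊥)
    (J : Ideal R) (hiso : Nonempty (OmegaOf R A ≃ₗ[R] J)) :
    J ≤ (maximalIdeal R) ^ s := by
  classical
  obtain ⟨φ⟩ := hiso
  set π : (Fin n → R) →ₗ[R] OmegaOf R A :=
    Submodule.mkQ (LinearMap.range (Matrix.toLin' A)) with hπ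
  set f : (Fin n → R) →ₗ[R] R := J.subtype ∘ₗ (φ.toLinearMap ∘ₗ π) with hf
  -- kernel of f is the range of A
  have hker : ∀ x : Fin n → R, f x = 0 → x ∈ LinearMap.range (Matrix.toLin' A) := by
    intro x hx
    have h1 : φ (π x) = 0 := by
      apply Subtype.ext
      simpa [hf] using hx
    have h2 : π x = 0 := by
      exact (map_eq_zero_iff φ φ.injective).mp h1
    simpa [hπ, Submodule.Quotient.mk_eq_zero] using h2
  -- each generator f (single j 1) lies in m^s
  have hg : ∀ j : Fin n, f (Pi.single j 1) ∈ (maximalIdeal R) ^ s := by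
    intro j
    have : Nontrivial (Fin n) := Fin.nontrivial_iff_two_le.mpr hn
    obtain ⟨i, hij⟩ := exists_ne j
    set v : Fin n → R :=
      f (Pi.single j 1) • (Pi.single i 1 : Fin n → R) - f (Pi.single i 1) • (Pi.single j 1 : Fin n → R) with hv
    have hfv : f v = 0 := by
      simp only [hv, map_sub, map_smul, smul_eq_mul]
      ring
    obtain ⟨w, hw⟩ := hker v hfv
    have hvi : v i = f (Pi.single j 1) := by
      simp [hv, Pi.single_eq_same, Pi.single_eq_of_ne hij]
    have hA' : Matrix.toLin' A w i ∈ (maximalIdeal R) ^ s := by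
      rw [Matrix.toLin'_apply]
      have : A.mulVec w i = ∑ k, A i k * w k := rfl
      rw [this]
      exact Submodule.sum_mem _ fun k _ => Ideal.mul_mem_right _ _ (hA i k)
    have : v i = Matrix.toLin' A w i := by rw [hw]
    rw [← hvi, this]
    exact hA'
  -- conclude
  intro x hx
  obtain ⟨ω, hω⟩ := φ.surjective ⟨x, hx⟩
  obtain ⟨y, hy⟩ := Submodule.mkQ_surjective _ ω
  have hfy : f y = x := by
    simp [hf, hπ, hy, hω]
  have hysum : y = ∑ k, y k • (Pi.single k 1 : Fin n → R) := by
    ext m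
    simp [Finset.sum_apply, Pi.single_apply]
  rw [← hfy, hysum, map_sum]
  refine Submodule.sum_mem _ fun k _ => ?_
  rw [map_smul]
  exact Submodule.smul_mem _ _ (hg k)
end
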